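/- Let d ≥ 3 and n ≥ 1 an integer, and define σ_n^{il}(x) = x^i x^l/(|x|² + 1/n) on ℝ^d for i, l = 1,…,d. Then for every x ∈ ℝ^d, Σ_{i,l} σ_n^{il}(x) ∂_i( Σ_j ∂_j σ_n^{jl} )(x) = [3(d−1)|x|⁴ + (d+1)|x|²/n]/(|x|²+1/n)³ − 4|x|⁴((d−1)|x|² + (d+1)/n)/(|x|²+1/n)⁴ ≤ (4d−2)/(|x|² + 1/n). -/

import Mathlib

open MeasureTheory
open scoped BigOperators

/-- The partial derivative `∂_i f` on `ℝ^d`. -/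
noncomputable def pd {d : ℕ} (i : Fin d) (f : EuclideanSpace ℝ (Fin d) → ℝ)
    (x : EuclideanSpace ℝ (Fin d)) : ℝ :=
  fderiv ℝ f x (EuclideanSpace.single i 1)

/-- The matrix field `σ_n^{il}(x) = x^i x^l/(|x|² + 1/n)`. -/
noncomputable def sFld (d n : ℕ) (i l : Fin d) (x : EuclideanSpace ℝ (Fin d)) : ℝ :=
  x i * x l / (‖x‖ ^ 2 + 1 / (n : ℝ))

namespace Stmt16Aux

variable {d : ℕ}

/-- `S y = ∑ y k ^ 2`. -/
def S (y : EuclideanSpace ℝ (Fin d)) : ℝ := ∑ k, y k ^ 2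

lemma norm_sq (y : EuclideanSpace ℝ (Fin d)) : ‖y‖ ^ 2 = S y := by
  rw [EuclideanSpace.norm_eq, Real.sq_sqrt (by positivity)]
  simp [S, sq_abs]

lemma S_nonneg (y : EuclideanSpace ℝ (Fin d)) : 0 ≤ S y := by
  rw [← norm_sq]; positivity

lemma hproj (k : Fin d) (x : EuclideanSpace ℝ (Fin d)) :
    HasFDerivAt (fun y : EuclideanSpace ℝ (Fin d) => y k)
      (EuclideanSpace.proj (𝕜 := ℝ) k) x :=
  (EuclideanSpace.proj (𝕜 := ℝ) k).hasFDerivAt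

lemma hasFDerivAt_S (x : EuclideanSpace ℝ (Fin d)) :
    HasFDerivAt S
      (∑ k, (2 * x k) • (EuclideanSpace.proj (𝕜 := ℝ) k)) x := by
  have h : ∀ k ∈ Finset.univ, HasFDerivAt (fun y : EuclideanSpace ℝ (Fin d) => y k ^ 2)
      ((2 * x k) • (EuclideanSpace.proj (𝕜 := ℝ) k)) x := by
    intro k _
    have h := (hproj k x).fun_mul (hproj k x)
    have h2 : ((2:ℝ) * x k) • (EuclideanSpace.proj (𝕜 := ℝ) k :
        EuclideanSpace ℝ (Fin d) →L[ℝ] ℝ) =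
        x k • EuclideanSpace.proj (𝕜 := ℝ) k + x k • EuclideanSpace.proj (𝕜 := ℝ) k := by
      rw [two_mul, add_smul]
    rw [h2]
    simpa [pow_two] using h
  have := HasFDerivAt.fun_sum h
  exact this

end Stmt16Aux

namespace Stmt16Aux

lemma pd_eq {d : ℕ} {f : EuclideanSpace ℝ (Fin d) → ℝ}
    {f' : EuclideanSpace ℝ (Fin d) →L[ℝ] ℝ} {x : EuclideanSpace ℝ (Fin d)}
    (h : HasFDerivAt f f' x)
    (i : Fin d) : pd i f x = f' (EuclideanSpace.single i 1) := by
  rw [pd, h.fderiv]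

lemma pd_sigma {d : ℕ} (c : ℝ) (x : EuclideanSpace ℝ (Fin d)) (hQ : 0 < S x + c)
    (i j l : Fin d) :
    pd i (fun y => y j * y l / (S y + c)) x =
      ((if j = i then 1 else 0) * x l + x j * (if l = i then 1 else 0)) / (S x + c)
        - x j * x l * (2 * x i) / (S x + c) ^ 2 := by
  have hden := (hasFDerivAt_S x).add_const c
  have hinv := (hasDerivAt_inv hQ.ne').comp_hasFDerivAt x hden
  have hnum := (hproj j x).fun_mul (hproj l x)
  have h := hnum.fun_mul hinv
  have heq : (fun y : EuclideanSpace ℝ (Fin d) => y j * y l / (S y + c))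
      = fun y => (y j * y l) * (S y + c)⁻¹ := by
    funext y; rw [div_eq_mul_inv]
  simp only [Function.comp_def] at h
  rw [heq, pd_eq h]
  simp only [ContinuousLinearMap.add_apply, ContinuousLinearMap.smul_apply,
    ContinuousLinearMap.sum_apply, ContinuousLinearMap.neg_apply,
    PiLp.proj_apply, EuclideanSpace.single_apply, smul_eq_mul,
    mul_ite, mul_one, mul_zero, Finset.sum_ite_eq', Finset.mem_univ, if_true]
  field_simp
  split_ifs <;> ring

end Stmt16Aux

namespace Stmt16Aux

/-- `g l y = (d+1) y^l/Q - 2 S y^l/Q²`. -/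
noncomputable def g (d : ℕ) (c : ℝ) (l : Fin d) (y : EuclideanSpace ℝ (Fin d)) : ℝ :=
  ((d : ℝ) + 1) * y l / (S y + c) - 2 * S y * y l / (S y + c) ^ 2

lemma sum_pd_sigma {d : ℕ} (c : ℝ) (hc : 0 < c) (l : Fin d) (y : EuclideanSpace ℝ (Fin d)) :
    ∑ j, pd j (fun z => z j * z l / (S z + c)) y = g d c l y := by
  have hQ : 0 < S y + c := by linarith [S_nonneg y]
  have h1 : ∀ j : Fin d, pd j (fun z => z j * z l / (S z + c)) y
      = y l / (S y + c) + (y j * (if j = l then 1 else 0)) / (S y + c)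
        - y j * y j * (2 * y l / (S y + c) ^ 2) := by
    intro j
    rw [pd_sigma c y hQ j j l]
    have : (if l = j then (1:ℝ) else 0) = (if j = l then 1 else 0) := by
      simp [eq_comm]
    rw [this]
    simp only [if_true]
    rw [one_mul, add_div]
    ring
  rw [Finset.sum_congr rfl fun j _ => h1 j]
  rw [Finset.sum_sub_distrib, Finset.sum_add_distrib, ← Finset.sum_div, ← Finset.sum_div,
    ← Finset.sum_mul]
  have e1 : ∑ _j : Fin d, y l = (d : ℝ) * y l := by
    simp [Finset.sum_const, mul_comm]
  have e2 : ∑ j : Fin d, y j * (if j = l then (1:ℝ) else 0) = y l := by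
    simp [mul_ite]
  have e3 : ∑ j : Fin d, y j * y j = S y := by
    simp [S, sq]
  rw [e1, e2, e3, g]
  field_simp

end Stmt16Aux

namespace Stmt16Aux

set_option maxHeartbeats 1000000 in
lemma pd_g {d : ℕ} (c : ℝ) (x : EuclideanSpace ℝ (Fin d)) (hQ : 0 < S x + c) (i l : Fin d) :
    pd i (g d c l) x =
      ((d : ℝ) + 1) * (if l = i then 1 else 0) / (S x + c)
        - ((d : ℝ) + 1) * x l * (2 * x i) / (S x + c) ^ 2
        - (4 * x i * x l + 2 * S x * (if l = i then 1 else 0)) / (S x + c) ^ 2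
        + 2 * S x * x l * (2 * (S x + c) * (2 * x i)) / (S x + c) ^ 4 := by
  have hQ2 : (0:ℝ) < (S x + c) * (S x + c) := mul_pos hQ hQ
  have hden := (hasFDerivAt_S x).add_const c
  have hinv := (hasDerivAt_inv hQ.ne').comp_hasFDerivAt x hden
  have hinv2 := (hasDerivAt_inv hQ2.ne').comp_hasFDerivAt x (hden.fun_mul hden)
  have hA := ((hproj l x).const_mul ((d : ℝ) + 1)).fun_mul hinv
  have hB := (((hasFDerivAt_S x).const_mul 2).fun_mul (hproj l x)).fun_mul hinv2
  have h := hA.fun_sub hB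
  simp only [Function.comp_def] at h
  have heq : g d c l = fun y : EuclideanSpace ℝ (Fin d) =>
      ((d : ℝ) + 1) * y l * (S y + c)⁻¹ - 2 * S y * y l * ((S y + c) * (S y + c))⁻¹ := by
    funext y; rw [g]
    rw [div_eq_mul_inv, div_eq_mul_inv, sq]
  rw [heq, pd_eq h]
  simp only [ContinuousLinearMap.add_apply, ContinuousLinearMap.sub_apply,
    ContinuousLinearMap.smul_apply, ContinuousLinearMap.sum_apply,
    ContinuousLinearMap.neg_apply, PiLp.proj_apply, EuclideanSpace.single_apply,
    smul_eq_mul, mul_ite, mul_one, mul_zero, Finset.sum_ite_eq', Finset.mem_univ, if_true]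
  by_cases hil : l = i <;> simp only [hil, if_true, if_false] <;> field_simp <;> ring

end Stmt16Aux

namespace Stmt16Aux

set_option maxHeartbeats 1000000 in
lemma total {d : ℕ} (c : ℝ) (hc : 0 < c) (x : EuclideanSpace ℝ (Fin d)) :
    ∑ i, ∑ l, (x i * x l / (S x + c)) * pd i (g d c l) x =
      ((d : ℝ) + 1) * S x / (S x + c) ^ 2 - (2 * (d : ℝ) + 8) * (S x) ^ 2 / (S x + c) ^ 3
        + 8 * (S x) ^ 3 / (S x + c) ^ 4 := by
  have hQ : 0 < S x + c := by linarith [S_nonneg x]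
  set A : ℝ := ((d : ℝ) + 1) / (S x + c) ^ 2 - 2 * S x / (S x + c) ^ 3 with hA
  set B : ℝ := -(2 * (d : ℝ) + 6) / (S x + c) ^ 3 + 8 * S x / (S x + c) ^ 4 with hB
  have hterm : ∀ i l : Fin d, (x i * x l / (S x + c)) * pd i (g d c l) x
      = (x i * x l * (if l = i then 1 else 0)) * A + (x i ^ 2 * x l ^ 2) * B := by
    intro i l
    rw [pd_g c x hQ i l, hA, hB]
    by_cases hil : l = i <;> simp only [hil, if_true, if_false] <;> field_simp <;> ring
  calc ∑ i, ∑ l, (x i * x l / (S x + c)) * pd i (g d c l) x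
      = ∑ i, ∑ l, ((x i * x l * (if l = i then 1 else 0)) * A + (x i ^ 2 * x l ^ 2) * B) :=
        Finset.sum_congr rfl fun i _ => Finset.sum_congr rfl fun l _ => hterm i l
    _ = (∑ i, ∑ l, x i * x l * (if l = i then 1 else 0)) * A
          + (∑ i, ∑ l, x i ^ 2 * x l ^ 2) * B := by
        simp only [Finset.sum_add_distrib, ← Finset.sum_mul]
    _ = S x * A + (S x * S x) * B := by
        congr 1
        · congr 1
          have : ∀ i : Fin d, ∑ l, x i * x l * (if l = i then (1:ℝ) else 0) = x i ^ 2 := by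
            intro i; simp [mul_ite, sq]
          rw [Finset.sum_congr rfl fun i _ => this i]; rfl
        · congr 1
          rw [← Finset.sum_mul_sum]; rfl
    _ = _ := by
        rw [hA, hB]; field_simp; ring

end Stmt16Aux

namespace Stmt16Aux

lemma ineq (D r m : ℝ) (hD : 3 ≤ D) (hr : 0 ≤ r) (hm : 0 < m) :
    (3 * (D - 1) * r ^ 4 + (D + 1) * r ^ 2 / m) / (r ^ 2 + 1 / m) ^ 3
      - 4 * r ^ 4 * ((D - 1) * r ^ 2 + (D + 1) / m) / (r ^ 2 + 1 / m) ^ 4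
      ≤ (4 * D - 2) / (r ^ 2 + 1 / m) := by
  set c : ℝ := 1 / m with hc
  have hc0 : 0 < c := by positivity
  have hQ : 0 < r ^ 2 + c := by positivity
  have hL : (3 * (D - 1) * r ^ 4 + (D + 1) * r ^ 2 / m) / (r ^ 2 + c) ^ 3
      - 4 * r ^ 4 * ((D - 1) * r ^ 2 + (D + 1) / m) / (r ^ 2 + c) ^ 4
      = ((1 - D) * r ^ 6 - 6 * r ^ 4 * c + (D + 1) * r ^ 2 * c ^ 2) / (r ^ 2 + c) ^ 4 := by
    have hm' : (m:ℝ) ≠ 0 := hm.ne'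
    rw [div_sub_div _ _ (by positivity) (by positivity),
      div_eq_div_iff (by positivity) (by positivity)]
    field_simp [hc]
    have hmc : m * c = 1 := by rw [hc]; field_simp
    linear_combination (3*r^4*D + 3*r^4 - r^2*D*c - r^2*c) * hmc
  have hR : (4 * D - 2) / (r ^ 2 + c)
      = (4 * D - 2) * (r ^ 2 + c) ^ 3 / (r ^ 2 + c) ^ 4 := by
    rw [eq_div_iff (by positivity)]
    field_simp
  rw [hL, hR, div_le_div_iff₀ (by positivity) (by positivity)]
  have key : (1 - D) * r ^ 6 - 6 * r ^ 4 * c + (D + 1) * r ^ 2 * c ^ 2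
      ≤ (4 * D - 2) * (r ^ 2 + c) ^ 3 := by
    nlinarith [pow_nonneg hr 6, mul_nonneg (pow_nonneg hr 4) hc0.le,
      mul_nonneg (pow_nonneg hr 2) (mul_nonneg hc0.le hc0.le), pow_pos hc0 3,
      mul_nonneg (mul_nonneg (pow_nonneg hr 2) (mul_nonneg hc0.le hc0.le)) (by linarith : (0:ℝ) ≤ D - 3),
      mul_nonneg (pow_nonneg hr 6) (by linarith : (0:ℝ) ≤ D - 3),
      mul_nonneg (mul_nonneg (pow_nonneg hr 4) hc0.le) (by linarith : (0:ℝ) ≤ D - 3),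
      mul_nonneg (pow_pos hc0 3).le (by linarith : (0:ℝ) ≤ D - 3)]
  nlinarith [mul_le_mul_of_nonneg_right key (le_of_lt (pow_pos hQ 4))]

end Stmt16Aux

open Stmt16Aux in
set_option maxHeartbeats 1000000 in
/-- For `d ≥ 3`, `n ≥ 1` and `σ_n^{il}(x) = x^i x^l/(|x|²+1/n)`:
`Σ_{i,l} σ_n^{il}(x) ∂_i(Σ_j ∂_j σ_n^{jl})(x)
  = [3(d−1)|x|⁴ + (d+1)|x|²/n]/(|x|²+1/n)³ − 4|x|⁴((d−1)|x|² + (d+1)/n)/(|x|²+1/n)⁴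
  ≤ (4d−2)/(|x|²+1/n)`. -/
theorem stmt16 (d n : ℕ) (hd : 3 ≤ d) (hn : 1 ≤ n) :
    ∀ x : EuclideanSpace ℝ (Fin d),
      (∑ i, ∑ l, sFld d n i l x * pd i (fun y => ∑ j, pd j (sFld d n j l) y) x =
        (3 * ((d : ℝ) - 1) * ‖x‖ ^ 4 + ((d : ℝ) + 1) * ‖x‖ ^ 2 / (n : ℝ)) /
            (‖x‖ ^ 2 + 1 / (n : ℝ)) ^ 3 -
          4 * ‖x‖ ^ 4 * (((d : ℝ) - 1) * ‖x‖ ^ 2 + ((d : ℝ) + 1) / (n : ℝ)) /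
            (‖x‖ ^ 2 + 1 / (n : ℝ)) ^ 4) ∧
      ∑ i, ∑ l, sFld d n i l x * pd i (fun y => ∑ j, pd j (sFld d n j l) y) x ≤
        (4 * (d : ℝ) - 2) / (‖x‖ ^ 2 + 1 / (n : ℝ)) := by
  intro x
  have hn' : (0:ℝ) < (n : ℝ) := by exact_mod_cast Nat.pos_of_ne_zero (by omega)
  have hc : (0:ℝ) < 1 / (n : ℝ) := by positivity
  have hQ : 0 < S x + 1 / (n : ℝ) := by linarith [S_nonneg x]
  have hfun : ∀ l : Fin d, (fun y => ∑ j, pd j (sFld d n j l) y)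
      = g d (1 / (n : ℝ)) l := by
    intro l; funext y
    have hs : ∀ j : Fin d, sFld d n j l
        = fun z : EuclideanSpace ℝ (Fin d) => z j * z l / (S z + 1 / (n : ℝ)) := by
      intro j; funext z; rw [sFld, norm_sq]
    calc ∑ j, pd j (sFld d n j l) y
        = ∑ j, pd j (fun z : EuclideanSpace ℝ (Fin d) => z j * z l / (S z + 1 / (n : ℝ))) y :=
          Finset.sum_congr rfl fun j _ => by rw [hs j]
      _ = g d (1 / (n : ℝ)) l y := sum_pd_sigma _ hc l y
  have hLHS : ∑ i, ∑ l, sFld d n i l x * pd i (fun y => ∑ j, pd j (sFld d n j l) y) x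
      = ((d : ℝ) + 1) * S x / (S x + 1 / (n : ℝ)) ^ 2
        - (2 * (d : ℝ) + 8) * (S x) ^ 2 / (S x + 1 / (n : ℝ)) ^ 3
        + 8 * (S x) ^ 3 / (S x + 1 / (n : ℝ)) ^ 4 := by
    calc ∑ i, ∑ l, sFld d n i l x * pd i (fun y => ∑ j, pd j (sFld d n j l) y) x
        = ∑ i, ∑ l, (x i * x l / (S x + 1 / (n : ℝ))) * pd i (g d (1 / (n : ℝ)) l) x := by
          refine Finset.sum_congr rfl fun i _ => Finset.sum_congr rfl fun l _ => ?_
          rw [hfun l, sFld, norm_sq]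
      _ = _ := total _ hc x
  have h4 : ‖x‖ ^ 4 = (S x) ^ 2 := by
    rw [show (4:ℕ) = 2 * 2 from rfl, pow_mul, norm_sq]
  have heq : ∑ i, ∑ l, sFld d n i l x * pd i (fun y => ∑ j, pd j (sFld d n j l) y) x =
      (3 * ((d : ℝ) - 1) * ‖x‖ ^ 4 + ((d : ℝ) + 1) * ‖x‖ ^ 2 / (n : ℝ)) /
          (‖x‖ ^ 2 + 1 / (n : ℝ)) ^ 3 -
        4 * ‖x‖ ^ 4 * (((d : ℝ) - 1) * ‖x‖ ^ 2 + ((d : ℝ) + 1) / (n : ℝ)) /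
          (‖x‖ ^ 2 + 1 / (n : ℝ)) ^ 4 := by
    rw [hLHS, h4, norm_sq,
      show ((d:ℝ)+1) * S x / (n:ℝ) = ((d:ℝ)+1) * S x * (1/(n:ℝ)) by ring,
      show ((d:ℝ)+1) / (n:ℝ) = ((d:ℝ)+1) * (1/(n:ℝ)) by ring]
    obtain ⟨c, hcpos, hgen⟩ : ∃ c : ℝ, 0 < c ∧ (1:ℝ)/(n:ℝ) = c := ⟨_, hc, rfl⟩
    rw [hgen]
    have hQc : S x + c ≠ 0 := by rw [← hgen]; exact hQ.ne'
    field_simp [hQc]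
    ring
  refine ⟨heq, ?_⟩
  rw [heq]
  exact ineq (d : ℝ) ‖x‖ (n : ℝ) (by exact_mod_cast hd) (norm_nonneg x) hn'
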